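/- Let A be an invertible n×n real matrix, p(·) : ℝⁿ → [1,∞) measurable with 1 ≤ p_- ≤ p_+ < ∞, p(·) ∈ N_∞(ℝⁿ), and p(Ax) ≤ p(x) a.e. Then there exists c > 0 such that ‖f ∘ A^{-1}‖_{L^{p(·)}(ℝⁿ)} ≤ c ‖f‖_{L^{p(·)}(ℝⁿ)} for all f ∈ L^{p(·)}(ℝⁿ). -/

import Mathlib

open MeasureTheory Metric
open scoped ENNReal

noncomputable section

variable {X : Type*} [MeasureSpace X] [PseudoMetricSpace X]

/-- The modular of the variable Lebesgue space `L^{p(·)}`. -/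
def modularVL (p f : X → ℝ) : ℝ≥0∞ := ∫⁻ x, ENNReal.ofReal (|f x| ^ p x)

/-- The Luxemburg norm of the variable Lebesgue space `L^{p(·)}`. -/
def luxNorm (p f : X → ℝ) : ℝ :=
  sInf {l : ℝ | 0 < l ∧ modularVL p (fun x => f x / l) ≤ 1}

/-- Membership in the variable Lebesgue space `L^{p(·)}`. -/
def MemVLp (p f : X → ℝ) : Prop :=
  ∃ l : ℝ, 0 < l ∧ modularVL p (fun x => f x / l) < ⊤

/-- The (uncentered) Hardy–Littlewood maximal operator. -/
def hlMax (f : X → ℝ) (x : X) : ℝ :=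
  sSup {r : ℝ | ∃ (c : X) (ρ : ℝ), 0 < ρ ∧ x ∈ ball c ρ ∧
    r = (volume (ball c ρ)).toReal⁻¹ * ∫ y in ball c ρ, |f y|}

/-- The fractional maximal operator of order `β` in dimension `nn`. -/
def fracMax (nn : ℕ) (β : ℝ) (f : X → ℝ) (x : X) : ℝ :=
  sSup {r : ℝ | ∃ (c : X) (ρ : ℝ), 0 < ρ ∧ x ∈ ball c ρ ∧
    r = (volume (ball c ρ)).toReal ^ (β / (nn : ℝ) - 1) * ∫ y in ball c ρ, |f y|}

/-- The Fefferman–Stein sharp maximal function. -/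
def sharpMax (f : X → ℝ) (x : X) : ℝ :=
  sSup {r : ℝ | ∃ (c : X) (ρ : ℝ), 0 < ρ ∧ x ∈ ball c ρ ∧
    r = (volume (ball c ρ)).toReal⁻¹ *
      ∫ y in ball c ρ, |f y - (volume (ball c ρ)).toReal⁻¹ * ∫ z in ball c ρ, f z|}

end
section Aux

open MeasureTheory
open scoped ENNReal

lemma key_ineq {t s r Λ : ℝ} (ht0 : 0 ≤ t) (ht1 : t ≤ 1) (hs : 0 < s) (hr : 0 < r)
    (hΛ : 0 < Λ) :
    t ^ s ≤ Real.exp (Λ * r) * t ^ r +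
      (if 1 / s = 1 / r then 0 else Real.exp (-Λ * |1 / s - 1 / r|⁻¹)) := by
  have hexp1 : (1:ℝ) ≤ Real.exp (Λ * r) := by
    rw [← Real.exp_zero]
    exact Real.exp_le_exp.mpr (by positivity)
  by_cases hsr : 1 / s = 1 / r
  · have : s = r := by
      field_simp at hsr; linarith
    subst this
    rw [if_pos rfl, add_zero]
    nlinarith [Real.rpow_nonneg ht0 s]
  · rw [if_neg hsr]
    rcases le_or_gt r s with h | h
    · have h1 : t ^ s ≤ t ^ r := by
        rcases eq_or_lt_of_le ht0 with h0 | h0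
        · rw [← h0]
          rw [Real.zero_rpow hs.ne', Real.zero_rpow hr.ne']
        · exact Real.rpow_le_rpow_of_exponent_ge h0 ht1 h
      have h2 : (0:ℝ) ≤ Real.exp (-Λ * |1 / s - 1 / r|⁻¹) := (Real.exp_pos _).le
      nlinarith [Real.rpow_nonneg ht0 r]
    · have hδpos : 0 < 1 / s - 1 / r := by
        have : 1 / r < 1 / s := one_div_lt_one_div_of_lt hs h
        linarith
      have habs : |1 / s - 1 / r| = 1 / s - 1 / r := abs_of_pos hδpos
      rcases eq_or_lt_of_le ht0 with h0 | h0
      · rw [← h0, Real.zero_rpow hs.ne']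
        positivity
      · have hlog : Real.log t ≤ 0 := Real.log_nonpos ht0 ht1
        rcases le_or_gt (Real.log t * s) (-(Λ * (1 / s - 1 / r)⁻¹)) with hc | hc
        · have h1 : t ^ s ≤ Real.exp (-Λ * |1 / s - 1 / r|⁻¹) := by
            rw [Real.rpow_def_of_pos h0, habs]
            apply Real.exp_le_exp.mpr
            linarith
          have h2 : (0:ℝ) ≤ Real.exp (Λ * r) * t ^ r := by positivity
          linarith
        · have hkey : t ^ s ≤ Real.exp (Λ * r) * t ^ r := by
            rw [Real.rpow_def_of_pos h0, Real.rpow_def_of_pos h0, ← Real.exp_add]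
            apply Real.exp_le_exp.mpr
            have hδinv : (1 / s - 1 / r)⁻¹ = (s * r) / (r - s) := by
              rw [show 1 / s - 1 / r = (r - s) / (s * r) by field_simp, inv_div]
            have hrs : 0 < r - s := by linarith
            rw [hδinv] at hc
            have h3 : (r - s) * (-Real.log t) < Λ * r := by
              calc (r - s) * (-Real.log t)
                  = -(Real.log t * s) * ((r - s) / s) := by field_simp
                _ < (Λ * (s * r / (r - s))) * ((r - s) / s) := by
                    apply mul_lt_mul_of_pos_right _ (by positivity)
                    linarith
                _ = Λ * r := by field_simp
            nlinarith
          have := (Real.exp_pos (-Λ * |1 / s - 1 / r|⁻¹)).le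
          linarith

lemma matrix_mulVec_measurable {n : ℕ} (M : Matrix (Fin n) (Fin n) ℝ) :
    Measurable (fun x : Fin n → ℝ => M.mulVec x) := by
  have : Continuous (Matrix.toLin' M) := LinearMap.continuous_on_pi _
  show Measurable (Matrix.toLin' M)
  exact this.measurable

lemma lintegral_comp_mulVec {n : ℕ} (M : Matrix (Fin n) (Fin n) ℝ) (hM : M.det ≠ 0)
    (Φ : (Fin n → ℝ) → ℝ≥0∞) (hΦ : Measurable Φ) :
    ∫⁻ x, Φ (M.mulVec x) = ENNReal.ofReal |M.det|⁻¹ * ∫⁻ y, Φ y := by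
  have hmap : Measure.map (fun x : Fin n → ℝ => M.mulVec x) volume
      = ENNReal.ofReal |M.det|⁻¹ • volume := by
    have := Real.map_matrix_volume_pi_eq_smul_volume_pi hM
    show Measure.map (Matrix.toLin' M) volume = _
    simpa [abs_inv] using this
  rw [← lintegral_map hΦ (matrix_mulVec_measurable M), hmap, lintegral_smul_measure, smul_eq_mul]

lemma rescaleVL {Y : Type*} [MeasureSpace Y] [PseudoMetricSpace Y] (p f : Y → ℝ)
    (hp1 : ∀ x, 1 ≤ p x) {c l : ℝ} (hc : 1 ≤ c) (hl : 0 < l) :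
    modularVL p (fun x => f x / (c * l)) ≤
      ENNReal.ofReal c⁻¹ * modularVL p (fun x => f x / l) := by
  have hc0 : 0 < c := lt_of_lt_of_le one_pos hc
  unfold modularVL
  rw [← lintegral_const_mul' _ _ ENNReal.ofReal_ne_top]
  refine lintegral_mono fun x => ?_
  have heq : f x / (c * l) = (f x / l) / c := by
    rw [div_div, mul_comm]
  show ENNReal.ofReal (|f x / (c * l)| ^ p x) ≤
      ENNReal.ofReal c⁻¹ * ENNReal.ofReal (|f x / l| ^ p x)
  rw [heq, abs_div, abs_of_pos hc0, Real.div_rpow (abs_nonneg _) hc0.le,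
    ← ENNReal.ofReal_mul (by positivity)]
  apply ENNReal.ofReal_le_ofReal
  rw [inv_mul_eq_div]
  have h1 : c ≤ c ^ p x := by
    calc c = c ^ (1:ℝ) := (Real.rpow_one c).symm
    _ ≤ c ^ p x := Real.rpow_le_rpow_of_exponent_le hc (hp1 x)
  gcongr

end Aux

section Main

open MeasureTheory
open scoped ENNReal

lemma main_est {n : ℕ} (A : Matrix (Fin n) (Fin n) ℝ) (hA : IsUnit A.det)
    (p : (Fin n → ℝ) → ℝ) (hp : Measurable p)
    (pminus pplus : ℝ) (h1 : 1 ≤ pminus)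
    (hlb : ∀ x, pminus ≤ p x) (hub : ∀ x, p x ≤ pplus)
    (Λ pinf : ℝ) (hΛ : 0 < Λ) (hpinf : 0 < pinf)
    (hle : ∀ᵐ x, p (A.mulVec x) ≤ p x)
    (f : (Fin n → ℝ) → ℝ) (hf : Measurable f)
    {l : ℝ} (hl : 0 < l)
    (hml : modularVL p (fun x => f x / l) ≤ 1) :
    modularVL p (fun x => f (A⁻¹.mulVec x) / l) ≤
      ENNReal.ofReal |A.det| *
        (1 + (ENNReal.ofReal (Real.exp (Λ * pinf)) * (ENNReal.ofReal (Real.exp (Λ * pplus)) +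
            (∫⁻ x in {x | 1 / p x ≠ 1 / pinf},
              ENNReal.ofReal (Real.exp (-Λ * |1 / p x - 1 / pinf|⁻¹)))) +
          ENNReal.ofReal |A.det|⁻¹ *
            (∫⁻ x in {x | 1 / p x ≠ 1 / pinf},
              ENNReal.ofReal (Real.exp (-Λ * |1 / p x - 1 / pinf|⁻¹))))) := by
  set K : ℝ≥0∞ := ∫⁻ x in {x | 1 / p x ≠ 1 / pinf},
      ENNReal.ofReal (Real.exp (-Λ * |1 / p x - 1 / pinf|⁻¹)) with hK
  have hdet : A.det ≠ 0 := hA.ne_zero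
  have hAinv : ∀ x, A.mulVec (A⁻¹.mulVec x) = x := fun x => by
    rw [Matrix.mulVec_mulVec, Matrix.mul_nonsing_inv A hA, Matrix.one_mulVec]
  have hdetinv : A⁻¹.det = A.det⁻¹ := by
    rw [Matrix.det_nonsing_inv, Ring.inverse_eq_inv']
  have hdinv : A⁻¹.det ≠ 0 := by
    rw [hdetinv]; exact inv_ne_zero hdet
  -- measurability
  have hpm : Measurable fun y => p (A.mulVec y) := hp.comp (matrix_mulVec_measurable A)
  have htm : Measurable fun y => |f y / l| := (hf.div_const l).abs
  have hΦ : Measurable fun y => ENNReal.ofReal (|f y / l| ^ p (A.mulVec y)) :=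
    (htm.pow hpm).ennreal_ofReal
  -- error function
  set err : (Fin n → ℝ) → ℝ :=
    fun z => if 1 / p z = 1 / pinf then 0 else Real.exp (-Λ * |1 / p z - 1 / pinf|⁻¹)
    with herrdef
  have herr_nonneg : ∀ z, 0 ≤ err z := by
    intro z
    rw [herrdef]
    dsimp only
    split
    · exact le_refl 0
    · exact (Real.exp_pos _).le
  have hsetmeas : MeasurableSet {z : Fin n → ℝ | 1 / p z = 1 / pinf} :=
    (measurable_const.div hp) (measurableSet_singleton (1 / pinf))
  have hsetmeas' : MeasurableSet {z : Fin n → ℝ | 1 / p z ≠ 1 / pinf} := hsetmeas.compl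
  have herr_meas : Measurable err := by
    rw [herrdef]
    exact Measurable.ite hsetmeas measurable_const
      ((((measurable_const.div hp).sub measurable_const).abs.inv.const_mul (-Λ)).exp)
  have hKerr : ∫⁻ y, ENNReal.ofReal (err y) = K := by
    rw [hK, ← lintegral_indicator hsetmeas' _]
    refine lintegral_congr fun y => ?_
    simp only [herrdef]
    by_cases h : 1 / p y = 1 / pinf
    · have hy : y ∉ {x : Fin n → ℝ | 1 / p x ≠ 1 / pinf} := fun hn => hn h
      rw [Set.indicator_of_notMem hy, if_pos h, ENNReal.ofReal_zero]
    · have hy : y ∈ {x : Fin n → ℝ | 1 / p x ≠ 1 / pinf} := h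
      rw [Set.indicator_of_mem hy, if_neg h]
  have hml' : ∫⁻ y, ENNReal.ofReal (|f y / l| ^ p y) ≤ 1 := hml
  -- core bound over the whole space
  have hQ : ∫⁻ y, ENNReal.ofReal (|f y / l| ^ p (A.mulVec y)) ≤
      1 + (ENNReal.ofReal (Real.exp (Λ * pinf)) * (ENNReal.ofReal (Real.exp (Λ * pplus)) + K) +
        ENNReal.ofReal |A.det|⁻¹ * K) := by
    set s : Set (Fin n → ℝ) := {y | 1 < |f y / l|} with hsdef
    have hs : MeasurableSet s := measurableSet_lt measurable_const htm
    rw [← lintegral_add_compl (fun y => ENNReal.ofReal (|f y / l| ^ p (A.mulVec y))) hs]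
    have part1 : ∫⁻ y in s, ENNReal.ofReal (|f y / l| ^ p (A.mulVec y)) ≤ 1 := by
      calc ∫⁻ y in s, ENNReal.ofReal (|f y / l| ^ p (A.mulVec y))
          ≤ ∫⁻ y in s, ENNReal.ofReal (|f y / l| ^ p y) := by
            refine lintegral_mono_ae ?_
            filter_upwards [ae_restrict_of_ae hle, ae_restrict_mem hs] with y hy hmem
            exact ENNReal.ofReal_le_ofReal
              (Real.rpow_le_rpow_of_exponent_le (le_of_lt hmem) hy)
        _ ≤ ∫⁻ y, ENNReal.ofReal (|f y / l| ^ p y) := setLIntegral_le_lintegral s _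
        _ ≤ 1 := hml'
    have part2 : ∫⁻ y in sᶜ, ENNReal.ofReal (|f y / l| ^ p (A.mulVec y)) ≤
        ENNReal.ofReal (Real.exp (Λ * pinf)) * (ENNReal.ofReal (Real.exp (Λ * pplus)) + K) +
          ENNReal.ofReal |A.det|⁻¹ * K := by
      have hE1 : (0:ℝ) ≤ Real.exp (Λ * pinf) := (Real.exp_pos _).le
      have hE2 : (0:ℝ) ≤ Real.exp (Λ * pplus) := (Real.exp_pos _).le
      calc ∫⁻ y in sᶜ, ENNReal.ofReal (|f y / l| ^ p (A.mulVec y))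
          ≤ ∫⁻ y in sᶜ, (ENNReal.ofReal (Real.exp (Λ * pinf)) *
              (ENNReal.ofReal (Real.exp (Λ * pplus)) * ENNReal.ofReal (|f y / l| ^ p y) +
                ENNReal.ofReal (err y)) + ENNReal.ofReal (err (A.mulVec y))) := by
            refine lintegral_mono_ae ?_
            filter_upwards [ae_restrict_mem hs.compl] with y hy
            have ht1 : |f y / l| ≤ 1 := not_lt.mp hy
            have ht0 : (0:ℝ) ≤ |f y / l| := abs_nonneg _
            have hpy : 0 < p y := by linarith [hlb y]
            have hpAy : 0 < p (A.mulVec y) := by linarith [hlb (A.mulVec y)]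
            have hA1 : |f y / l| ^ p (A.mulVec y) ≤
                Real.exp (Λ * pinf) * |f y / l| ^ pinf + err (A.mulVec y) := by
              have h := key_ineq ht0 ht1 hpAy hpinf hΛ
              rw [herrdef]
              exact h
            have hA2 : |f y / l| ^ pinf ≤
                Real.exp (Λ * pplus) * |f y / l| ^ p y + err y := by
              have h := key_ineq ht0 ht1 hpinf hpy hΛ
              have hif : (if 1 / pinf = 1 / p y then (0:ℝ)
                  else Real.exp (-Λ * |1 / pinf - 1 / p y|⁻¹)) = err y := by
                simp only [herrdef]
                by_cases hcond : 1 / p y = 1 / pinf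
                · rw [if_pos hcond.symm, if_pos hcond]
                · rw [if_neg (fun hh => hcond hh.symm), if_neg hcond, abs_sub_comm]
              rw [hif] at h
              have hexp : Real.exp (Λ * p y) ≤ Real.exp (Λ * pplus) :=
                Real.exp_le_exp.mpr (mul_le_mul_of_nonneg_left (hub y) hΛ.le)
              have hrp : (0:ℝ) ≤ |f y / l| ^ p y := Real.rpow_nonneg ht0 _
              nlinarith
            have hreal : |f y / l| ^ p (A.mulVec y) ≤
                Real.exp (Λ * pinf) * (Real.exp (Λ * pplus) * |f y / l| ^ p y + err y) +
                  err (A.mulVec y) := by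
              have h2 := mul_le_mul_of_nonneg_left hA2 hE1
              linarith
            calc ENNReal.ofReal (|f y / l| ^ p (A.mulVec y))
                ≤ ENNReal.ofReal (Real.exp (Λ * pinf) *
                    (Real.exp (Λ * pplus) * |f y / l| ^ p y + err y) + err (A.mulVec y)) :=
                  ENNReal.ofReal_le_ofReal hreal
              _ = ENNReal.ofReal (Real.exp (Λ * pinf)) *
                    (ENNReal.ofReal (Real.exp (Λ * pplus)) * ENNReal.ofReal (|f y / l| ^ p y) +
                      ENNReal.ofReal (err y)) + ENNReal.ofReal (err (A.mulVec y)) := by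
                  rw [ENNReal.ofReal_add
                      (mul_nonneg hE1 (add_nonneg (mul_nonneg hE2 (Real.rpow_nonneg ht0 _))
                        (herr_nonneg y))) (herr_nonneg _),
                    ENNReal.ofReal_mul hE1,
                    ENNReal.ofReal_add (mul_nonneg hE2 (Real.rpow_nonneg ht0 _)) (herr_nonneg y),
                    ENNReal.ofReal_mul hE2]
        _ = ENNReal.ofReal (Real.exp (Λ * pinf)) *
              (ENNReal.ofReal (Real.exp (Λ * pplus)) *
                  (∫⁻ y in sᶜ, ENNReal.ofReal (|f y / l| ^ p y)) +
                ∫⁻ y in sᶜ, ENNReal.ofReal (err y)) +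
              ∫⁻ y in sᶜ, ENNReal.ofReal (err (A.mulVec y)) := by
            have hg2 : Measurable fun y => ENNReal.ofReal (err (A.mulVec y)) :=
              (herr_meas.comp (matrix_mulVec_measurable A)).ennreal_ofReal
            rw [lintegral_add_right _ hg2,
              lintegral_const_mul' _ _ ENNReal.ofReal_ne_top,
              lintegral_add_right _ herr_meas.ennreal_ofReal,
              lintegral_const_mul' _ _ ENNReal.ofReal_ne_top]
        _ ≤ ENNReal.ofReal (Real.exp (Λ * pinf)) *
              (ENNReal.ofReal (Real.exp (Λ * pplus)) * 1 + K) +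
              ENNReal.ofReal |A.det|⁻¹ * K := by
            have i1 : ∫⁻ y in sᶜ, ENNReal.ofReal (|f y / l| ^ p y) ≤ 1 :=
              le_trans (setLIntegral_le_lintegral _ _) hml'
            have i2 : ∫⁻ y in sᶜ, ENNReal.ofReal (err y) ≤ K :=
              le_trans (setLIntegral_le_lintegral _ _) (le_of_eq hKerr)
            have i3 : ∫⁻ y in sᶜ, ENNReal.ofReal (err (A.mulVec y)) ≤
                ENNReal.ofReal |A.det|⁻¹ * K := by
              calc ∫⁻ y in sᶜ, ENNReal.ofReal (err (A.mulVec y))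
                  ≤ ∫⁻ y, ENNReal.ofReal (err (A.mulVec y)) := setLIntegral_le_lintegral _ _
                _ = ENNReal.ofReal |A.det|⁻¹ * ∫⁻ y, ENNReal.ofReal (err y) :=
                    lintegral_comp_mulVec A hdet _ herr_meas.ennreal_ofReal
                _ = ENNReal.ofReal |A.det|⁻¹ * K := by rw [hKerr]
            exact add_le_add (mul_le_mul' le_rfl (add_le_add (mul_le_mul' le_rfl i1) i2)) i3
        _ = ENNReal.ofReal (Real.exp (Λ * pinf)) *
              (ENNReal.ofReal (Real.exp (Λ * pplus)) + K) +
              ENNReal.ofReal |A.det|⁻¹ * K := by rw [mul_one]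
    exact add_le_add part1 part2
  calc modularVL p (fun x => f (A⁻¹.mulVec x) / l)
      = ∫⁻ x, ENNReal.ofReal (|f (A⁻¹.mulVec x) / l| ^ p (A.mulVec (A⁻¹.mulVec x))) := by
        unfold modularVL
        exact lintegral_congr fun x => by rw [hAinv x]
    _ = ENNReal.ofReal |A⁻¹.det|⁻¹ * ∫⁻ y, ENNReal.ofReal (|f y / l| ^ p (A.mulVec y)) :=
        lintegral_comp_mulVec A⁻¹ hdinv _ hΦ
    _ = ENNReal.ofReal |A.det| * ∫⁻ y, ENNReal.ofReal (|f y / l| ^ p (A.mulVec y)) := by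
        rw [hdetinv, abs_inv, inv_inv]
    _ ≤ _ := mul_le_mul' le_rfl hQ

end Main

lemma exists_le_one {Y : Type*} [MeasureSpace Y] [PseudoMetricSpace Y] (p f : Y → ℝ)
    (hp1 : ∀ x, 1 ≤ p x) (h : MemVLp p f) :
    ∃ l : ℝ, 0 < l ∧ modularVL p (fun x => f x / l) ≤ 1 := by
  obtain ⟨l0, hl0, hM⟩ := h
  set m := (modularVL p (fun x => f x / l0)).toReal with hm
  have hm0 : 0 ≤ m := ENNReal.toReal_nonneg
  have hc1 : (1:ℝ) ≤ 1 + m := by linarith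
  refine ⟨(1 + m) * l0, by positivity, ?_⟩
  calc modularVL p (fun x => f x / ((1 + m) * l0))
      ≤ ENNReal.ofReal (1 + m)⁻¹ * modularVL p (fun x => f x / l0) :=
        rescaleVL p f hp1 hc1 hl0
    _ = ENNReal.ofReal (1 + m)⁻¹ * ENNReal.ofReal m := by
        rw [hm, ENNReal.ofReal_toReal hM.ne]
    _ = ENNReal.ofReal ((1 + m)⁻¹ * m) := (ENNReal.ofReal_mul (by positivity)).symm
    _ ≤ 1 := by
        rw [← ENNReal.ofReal_one]
        apply ENNReal.ofReal_le_ofReal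
        rw [inv_mul_eq_div]
        exact div_le_one_of_le₀ (by linarith) (by positivity)

/-- if `A` is invertible, `1 ≤ p_- ≤ p(x) ≤ p_+ < ∞`, `p(·) ∈ N_∞(ℝⁿ)` and
`p(Ax) ≤ p(x)` a.e., then there is `c > 0` with
`‖f ∘ A⁻¹‖_{p(·)} ≤ c ‖f‖_{p(·)}` for all `f ∈ L^{p(·)}(ℝⁿ)`. -/
theorem stmt7 {n : ℕ} (A : Matrix (Fin n) (Fin n) ℝ) (hA : IsUnit A.det)
    (p : (Fin n → ℝ) → ℝ) (hp : Measurable p)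
    (pminus pplus : ℝ) (h1 : 1 ≤ pminus)
    (hlb : ∀ x, pminus ≤ p x) (hub : ∀ x, p x ≤ pplus)
    (Λ pinf : ℝ) (hΛ : 0 < Λ)
    (hN : (∫⁻ x in {x | 1 / p x ≠ 1 / pinf},
      ENNReal.ofReal (Real.exp (-Λ * |1 / p x - 1 / pinf|⁻¹))) < ⊤)
    (hle : ∀ᵐ x, p (A.mulVec x) ≤ p x) :
    ∃ c : ℝ, 0 < c ∧ ∀ f : (Fin n → ℝ) → ℝ, Measurable f → MemVLp p f →
      luxNorm p (fun x => f (A⁻¹.mulVec x)) ≤ c * luxNorm p f := by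
  have hp1 : ∀ x, (1:ℝ) ≤ p x := fun x => le_trans h1 (hlb x)
  rcases Nat.eq_zero_or_pos n with hn | hn
  · subst hn
    refine ⟨1, one_pos, fun f hf hmem => ?_⟩
    have hfunext : (fun x => f (A⁻¹.mulVec x)) = f :=
      funext fun x => congrArg f (Subsingleton.elim _ _)
    rw [hfunext, one_mul]
  · have hpinf : 0 < pinf := by
      by_contra hpinf
      push_neg at hpinf
      have hset : {x : Fin n → ℝ | 1 / p x ≠ 1 / pinf} = Set.univ := by
        apply Set.eq_univ_of_forall
        intro x
        have hpx : (0:ℝ) < p x := by linarith [hlb x]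
        have h1p : (0:ℝ) < 1 / p x := by positivity
        have h2 : 1 / pinf ≤ 0 := one_div_nonpos.mpr hpinf
        exact ne_of_gt (lt_of_le_of_lt h2 h1p)
      have hpplus : (0:ℝ) < pplus := by linarith [hlb 0, hub 0]
      have hlow : ∀ x : Fin n → ℝ, ENNReal.ofReal (Real.exp (-Λ * pplus)) ≤
          ENNReal.ofReal (Real.exp (-Λ * |1 / p x - 1 / pinf|⁻¹)) := by
        intro x
        apply ENNReal.ofReal_le_ofReal
        apply Real.exp_le_exp.mpr
        have hpx : (0:ℝ) < p x := by linarith [hlb x]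
        have h2 : 1 / pinf ≤ 0 := one_div_nonpos.mpr hpinf
        have hd : 1 / p x ≤ 1 / p x - 1 / pinf := by linarith
        have hdpos : 0 < 1 / p x - 1 / pinf := lt_of_lt_of_le (by positivity) hd
        have habs : |1 / p x - 1 / pinf| = 1 / p x - 1 / pinf := abs_of_pos hdpos
        have hinv : (1 / p x - 1 / pinf)⁻¹ ≤ pplus := by
          have hge : 1 / pplus ≤ 1 / p x - 1 / pinf :=
            le_trans (one_div_le_one_div_of_le hpx (hub x)) hd
          calc (1 / p x - 1 / pinf)⁻¹ ≤ (1 / pplus)⁻¹ :=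
                inv_anti₀ (by positivity) hge
            _ = pplus := by rw [one_div, inv_inv]
        rw [habs]
        nlinarith
      have hvol : (volume : Measure (Fin n → ℝ)) Set.univ = ⊤ := by
        rw [volume_pi, Measure.pi_univ]
        simp only [Real.volume_univ, Finset.prod_const, Finset.card_univ, Fintype.card_fin]
        exact ENNReal.top_pow hn.ne'
      have htop : (∫⁻ x in {x : Fin n → ℝ | 1 / p x ≠ 1 / pinf},
          ENNReal.ofReal (Real.exp (-Λ * |1 / p x - 1 / pinf|⁻¹))) = ⊤ := by
        rw [hset, Measure.restrict_univ]
        refine eq_top_iff.mpr ?_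
        calc (⊤:ℝ≥0∞) = ENNReal.ofReal (Real.exp (-Λ * pplus)) * volume (Set.univ : Set (Fin n → ℝ)) := by
              rw [hvol, ENNReal.mul_top (ENNReal.ofReal_pos.mpr (Real.exp_pos _)).ne']
          _ = ∫⁻ _x : Fin n → ℝ, ENNReal.ofReal (Real.exp (-Λ * pplus)) := (lintegral_const _).symm
          _ ≤ ∫⁻ x : Fin n → ℝ, ENNReal.ofReal (Real.exp (-Λ * |1 / p x - 1 / pinf|⁻¹)) :=
              lintegral_mono hlow
      rw [htop] at hN
      exact lt_irrefl _ hN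
    set K : ℝ≥0∞ := ∫⁻ x in {x : Fin n → ℝ | 1 / p x ≠ 1 / pinf},
        ENNReal.ofReal (Real.exp (-Λ * |1 / p x - 1 / pinf|⁻¹)) with hKdef
    have hKtop : K ≠ ⊤ := hN.ne
    set CE : ℝ≥0∞ := ENNReal.ofReal |A.det| *
        (1 + (ENNReal.ofReal (Real.exp (Λ * pinf)) * (ENNReal.ofReal (Real.exp (Λ * pplus)) + K) +
          ENNReal.ofReal |A.det|⁻¹ * K)) with hCE
    have hCEtop : CE ≠ ⊤ := by
      rw [hCE]
      apply ENNReal.mul_ne_top ENNReal.ofReal_ne_top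
      apply ENNReal.add_ne_top.mpr
      refine ⟨ENNReal.one_ne_top, ?_⟩
      apply ENNReal.add_ne_top.mpr
      constructor
      · exact ENNReal.mul_ne_top ENNReal.ofReal_ne_top
          (ENNReal.add_ne_top.mpr ⟨ENNReal.ofReal_ne_top, hKtop⟩)
      · exact ENNReal.mul_ne_top ENNReal.ofReal_ne_top hKtop
    set c : ℝ := max CE.toReal 1 with hc
    have hc1 : (1:ℝ) ≤ c := le_max_right _ _
    have hc0 : (0:ℝ) < c := lt_of_lt_of_le one_pos hc1
    refine ⟨c, hc0, fun f hf hmem => ?_⟩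
    obtain ⟨l1, hl1pos, hl1⟩ := exists_le_one p f hp1 hmem
    have hmemT : ∀ l : ℝ, 0 < l → modularVL p (fun x => f x / l) ≤ 1 →
        0 < c * l ∧ modularVL p (fun x => f (A⁻¹.mulVec x) / (c * l)) ≤ 1 := by
      intro l hl hml
      refine ⟨by positivity, ?_⟩
      have hb1 := main_est A hA p hp pminus pplus h1 hlb hub Λ pinf hΛ hpinf hle f hf hl hml
      have hb2 := rescaleVL p (fun x => f (A⁻¹.mulVec x)) hp1 hc1 hl
      calc modularVL p (fun x => f (A⁻¹.mulVec x) / (c * l))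
          ≤ ENNReal.ofReal c⁻¹ * modularVL p (fun x => f (A⁻¹.mulVec x) / l) := hb2
        _ ≤ ENNReal.ofReal c⁻¹ * CE := mul_le_mul' le_rfl (by rw [hCE]; exact hb1)
        _ ≤ ENNReal.ofReal c⁻¹ * ENNReal.ofReal c := by
            apply mul_le_mul' le_rfl
            calc CE = ENNReal.ofReal CE.toReal := (ENNReal.ofReal_toReal hCEtop).symm
              _ ≤ ENNReal.ofReal c := ENNReal.ofReal_le_ofReal (le_max_left _ _)
        _ = 1 := by
            rw [← ENNReal.ofReal_mul (by positivity), inv_mul_cancel₀ hc0.ne',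
              ENNReal.ofReal_one]
    unfold luxNorm
    have hbddT : BddBelow {l : ℝ | 0 < l ∧
        modularVL p (fun x => (fun x => f (A⁻¹.mulVec x)) x / l) ≤ 1} :=
      ⟨0, fun x hx => hx.1.le⟩
    have hkey : ∀ l ∈ {l : ℝ | 0 < l ∧ modularVL p (fun x => f x / l) ≤ 1},
        sInf {l : ℝ | 0 < l ∧
          modularVL p (fun x => (fun x => f (A⁻¹.mulVec x)) x / l) ≤ 1} ≤ c * l := by
      intro l hl
      exact csInf_le hbddT (hmemT l hl.1 hl.2)
    have h2 : sInf {l : ℝ | 0 < l ∧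
        modularVL p (fun x => (fun x => f (A⁻¹.mulVec x)) x / l) ≤ 1} / c ≤
        sInf {l : ℝ | 0 < l ∧ modularVL p (fun x => f x / l) ≤ 1} := by
      refine le_csInf ⟨l1, hl1pos, hl1⟩ fun l hl => ?_
      rw [div_le_iff₀ hc0, mul_comm]
      exact hkey l hl
    have h3 := (div_le_iff₀ hc0).mp h2
    linarith
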